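/- Let P : C^op → InfSL be a variational doctrine, f : X → A and g : Y → A arrows of C, and ρ, σ P-equivalence relations over X, Y with ρ ≤ P(f×f)(δ_A) and σ ≤ P(g×g)(δ_A). If the square in C formed by k : S → X, h : S → Y with f∘k = g∘h is a weak pullback, then the square in Q_P with vertex (S, P(h×h)(σ) ∧ P(k×k)(ρ)), arrows [k] : → (X,ρ), [h] : → (Y,σ) over (A, δ_A) via [f] and [g], is a (strong) pullback in Q_P. -/

import Mathlib

open CategoryTheory CategoryTheory.Limits Opposite

noncomputable section

universe w v u

namespace DoctrinePaper

variable {C : Type u} [Category.{v} C] [HasFiniteProducts C]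

/-- The fiber of a primary doctrine `P : Cᵒᵖ ⥤ SemilatInfCat` over an object `A`. -/
abbrev Fib (P : Cᵒᵖ ⥤ SemilatInfCat.{w}) (A : C) : Type w :=
  ↥(P.obj (op A))

/-- Reindexing along an arrow `f : A ⟶ B`. -/
def rmap (P : Cᵒᵖ ⥤ SemilatInfCat.{w}) {A B : C} (f : A ⟶ B) :
    Fib P B → Fib P A :=
  fun x => (P.map f.op) x

variable (P : Cᵒᵖ ⥤ SemilatInfCat.{w})

/-- An elementary doctrine: fibered equalities `δ A ∈ P (A ⨯ A)` such that
`E_e(α) = P⟨pr1,pr2⟩(α) ⊓ P⟨pr2,pr3⟩(δ A)` is left adjoint to reindexing along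
`e = ⟨pr1,pr2,pr2⟩ : X ⨯ A ⟶ (X ⨯ A) ⨯ A`. -/
structure IsElementary where
  δ : ∀ A : C, Fib P (A ⨯ A)
  adj :
    ∀ (X A : C) (α : Fib P (X ⨯ A)) (β : Fib P ((X ⨯ A) ⨯ A)),
      (rmap P (prod.fst : (X ⨯ A) ⨯ A ⟶ X ⨯ A) α ⊓
          rmap P (prod.lift (prod.fst ≫ prod.snd) prod.snd : (X ⨯ A) ⨯ A ⟶ A ⨯ A) (δ A) ≤ β)
        ↔ α ≤ rmap P (prod.lift (𝟙 (X ⨯ A)) prod.snd : X ⨯ A ⟶ (X ⨯ A) ⨯ A) β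

/-- A `P`-equivalence relation over `A`. -/
structure IsEqRel (hE : IsElementary P) {A : C} (ρ : Fib P (A ⨯ A)) : Prop where
  refl : hE.δ A ≤ ρ
  symm : ρ = rmap P (prod.lift prod.snd prod.fst : A ⨯ A ⟶ A ⨯ A) ρ
  trans :
    rmap P (prod.fst : (A ⨯ A) ⨯ A ⟶ A ⨯ A) ρ ⊓
        rmap P (prod.lift (prod.fst ≫ prod.snd) prod.snd : (A ⨯ A) ⨯ A ⟶ A ⨯ A) ρ ≤
      rmap P (prod.lift (prod.fst ≫ prod.fst) prod.snd : (A ⨯ A) ⨯ A ⟶ A ⨯ A) ρ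

/-- An elementary existential doctrine, together with the induced left adjoints
`∃_f` along all arrows, satisfying the adjunction law, Frobenius reciprocity, and
the Beck–Chevalley condition along pullbacks of projections. -/
structure IsExistential extends IsElementary P where
  E : ∀ {A B : C}, (A ⟶ B) → Fib P A → Fib P B
  adjE : ∀ {A B : C} (f : A ⟶ B) (α : Fib P A) (β : Fib P B),
    E f α ≤ β ↔ α ≤ rmap P f β
  frobenius : ∀ {A B : C} (f : A ⟶ B) (α : Fib P A) (β : Fib P B),
    E f (α ⊓ rmap P f β) = E f α ⊓ β
  beckChevalley : ∀ {B A A' : C} (f : A' ⟶ A) (β : Fib P (B ⨯ A)),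
    E (prod.snd : B ⨯ A' ⟶ A') (rmap P (prod.map (𝟙 B) f) β) =
      rmap P f (E (prod.snd : B ⨯ A ⟶ A) β)

/-- Descent data for a relation `ρ` over `A`. -/
def Des {A : C} (ρ : Fib P (A ⨯ A)) : Set (Fib P A) :=
  {α | rmap P (prod.fst : A ⨯ A ⟶ A) α ⊓ ρ ≤ rmap P (prod.snd : A ⨯ A ⟶ A) α}

/-- Comprehensive diagonals: `f = g` iff `⊤ = P⟨f,g⟩(δ)`. -/
def ComprehensiveDiagonals (hE : IsElementary P) : Prop :=
  ∀ {X A : C} (f g : X ⟶ A), f = g ↔ rmap P (prod.lift f g) (hE.δ A) = ⊤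

/-- (Weak) comprehension structure. -/
structure Comprehension where
  cObj : ∀ {A : C}, Fib P A → C
  cArr : ∀ {A : C} (α : Fib P A), cObj α ⟶ A
  cTop : ∀ {A : C} (α : Fib P A), rmap P (cArr α) α = ⊤
  cUniv : ∀ {A : C} (α : Fib P A) {Y : C} (f : Y ⟶ A),
    rmap P f α = ⊤ → ∃ k : Y ⟶ cObj α, k ≫ cArr α = f

/-- Full comprehension. -/
def Comprehension.Full (hC : Comprehension P) : Prop :=
  ∀ {A : C} (α β : Fib P A), α ≤ β ↔ rmap P (hC.cArr α) β = ⊤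

/-- Strong comprehension: comprehension arrows are monic. -/
def Comprehension.Strong (hC : Comprehension P) : Prop :=
  ∀ {A : C} (α : Fib P A), Mono (hC.cArr α)

/-- `P`-injective arrow. -/
def PInj (hE : IsElementary P) {X A : C} (f : X ⟶ A) : Prop :=
  rmap P (prod.map f f) (hE.δ A) = hE.δ X

/-- `P`-surjective arrow. -/
def PSurj (hEx : IsExistential P) {X A : C} (f : X ⟶ A) : Prop :=
  hEx.E f (⊤ : Fib P X) = ⊤

/-- The product relation `ρ ⊠ σ` on `(A ⨯ B) ⨯ (A ⨯ B)`. -/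
def boxprod {A B : C} (ρ : Fib P (A ⨯ A)) (σ : Fib P (B ⨯ B)) :
    Fib P ((A ⨯ B) ⨯ (A ⨯ B)) :=
  rmap P (prod.map prod.fst prod.fst) ρ ⊓ rmap P (prod.map prod.snd prod.snd) σ

/-- The hom condition of the elementary quotient completion: `f : A ⟶ B`
represents an arrow `(A,ρ) ⟶ (B,σ)` iff `ρ ≤ P(f×f)(σ)`. -/
def QHomC {A B : C} (ρ : Fib P (A ⨯ A)) (σ : Fib P (B ⨯ B)) (f : A ⟶ B) : Prop :=
  ρ ≤ rmap P (prod.map f f) σ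

/-- The equivalence on representatives: `f ∼ g` iff `⊤ = P⟨f,g⟩(σ)`. -/
def QEq {A B : C} (σ : Fib P (B ⨯ B)) (f g : A ⟶ B) : Prop :=
  rmap P (prod.lift f g) σ = ⊤


omit [HasFiniteProducts C] in
lemma rmap_comp {A B D : C} (f : A ⟶ B) (g : B ⟶ D) (x : Fib P D) :
    rmap P (f ≫ g) x = rmap P f (rmap P g x) := by
  simp [rmap, op_comp, P.map_comp]

omit [HasFiniteProducts C] in
lemma rmap_inf' {A B : C} (f : A ⟶ B) (x y : Fib P B) :
    rmap P f (x ⊓ y) = rmap P f x ⊓ rmap P f y :=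
  (P.map f.op).map_inf' x y

omit [HasFiniteProducts C] in
lemma rmap_mono {A B : C} (f : A ⟶ B) {a b : Fib P B} (hab : a ≤ b) :
    rmap P f a ≤ rmap P f b := by
  rw [← inf_eq_left] at hab ⊢
  rw [← rmap_inf', hab]

lemma rmap_swap (hE : IsElementary P) {Z W : C} (a b : Z ⟶ W) {τ : Fib P (W ⨯ W)}
    (hτ : IsEqRel P hE τ) :
    rmap P (prod.lift a b) τ = rmap P (prod.lift b a) τ := by
  conv_lhs => rw [hτ.symm]
  rw [← rmap_comp]
  congr 1
  simp [prod.comp_lift]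
  erw [prod.lift_snd, prod.lift_fst]

lemma rmap_diag_top (hE : IsElementary P) (hcd : ComprehensiveDiagonals P hE)
    {Z W : C} (a : Z ⟶ W) {τ : Fib P (W ⨯ W)} (hτ : IsEqRel P hE τ) :
    rmap P (prod.lift a a) τ = ⊤ := by
  refine le_antisymm le_top ?_
  have h1 : rmap P (prod.lift a a) (hE.δ W) = ⊤ := (hcd a a).mp rfl
  rw [← h1]
  exact rmap_mono P _ hτ.refl

/-- Let `P` be variational, `f : X ⟶ A`, `g : Y ⟶ A`, and `ρ`,
`σ` `P`-equivalence relations over `X`, `Y` with `ρ ≤ P(f×f)(δ A)` and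
`σ ≤ P(g×g)(δ A)`. If `k : S ⟶ X`, `h : S ⟶ Y` with `f ∘ k = g ∘ h` form a weak
pullback in `C`, then the corresponding square over `(A, δ_A)` with vertex
`(S, P(h×h)(σ) ⊓ P(k×k)(ρ))` is a (strong) pullback in `Q_P`. -/
theorem weak_pullback_to_pullback
    (hE : IsElementary P) (hC : Comprehension P)
    (hfull : hC.Full P) (hcd : ComprehensiveDiagonals P hE)
    {X Y A S : C} (f : X ⟶ A) (g : Y ⟶ A)
    (ρ : Fib P (X ⨯ X)) (σ : Fib P (Y ⨯ Y))
    (hρ : IsEqRel P hE ρ) (hσ : IsEqRel P hE σ)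
    (hρf : ρ ≤ rmap P (prod.map f f) (hE.δ A))
    (hσg : σ ≤ rmap P (prod.map g g) (hE.δ A))
    (k : S ⟶ X) (h : S ⟶ Y) (hcomm : k ≫ f = h ≫ g)
    (hwp : ∀ {Z : C} (a : Z ⟶ X) (b : Z ⟶ Y), a ≫ f = b ≫ g →
      ∃ u : Z ⟶ S, u ≫ k = a ∧ u ≫ h = b) :
    QHomC P (rmap P (prod.map h h) σ ⊓ rmap P (prod.map k k) ρ) ρ k ∧
    QHomC P (rmap P (prod.map h h) σ ⊓ rmap P (prod.map k k) ρ) σ h ∧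
    QEq P (hE.δ A) (k ≫ f) (h ≫ g) ∧
    ∀ {Z : C} (γ : Fib P (Z ⨯ Z)), IsEqRel P hE γ →
      ∀ (a : Z ⟶ X) (b : Z ⟶ Y), QHomC P γ ρ a → QHomC P γ σ b →
        QEq P (hE.δ A) (a ≫ f) (b ≫ g) →
        ∃ u : Z ⟶ S,
          QHomC P γ (rmap P (prod.map h h) σ ⊓ rmap P (prod.map k k) ρ) u ∧
          QEq P ρ (u ≫ k) a ∧ QEq P σ (u ≫ h) b ∧
          ∀ u' : Z ⟶ S,
            QHomC P γ (rmap P (prod.map h h) σ ⊓ rmap P (prod.map k k) ρ) u' →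
            QEq P ρ (u' ≫ k) a → QEq P σ (u' ≫ h) b →
            QEq P (rmap P (prod.map h h) σ ⊓ rmap P (prod.map k k) ρ) u u' := by
  refine ⟨inf_le_right, inf_le_left, (hcd _ _).mp hcomm, ?_⟩
  intro Z γ hγ a b ha hb hab
  obtain ⟨u, hu1, hu2⟩ := hwp a b ((hcd _ _).mpr hab)
  refine ⟨u, ?_, ?_, ?_, ?_⟩
  · show γ ≤ _
    rw [rmap_inf', ← rmap_comp, ← rmap_comp, prod.map_map, prod.map_map, hu1, hu2]
    exact le_inf hb ha
  · show rmap P (prod.lift (u ≫ k) a) ρ = ⊤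
    rw [hu1]; exact rmap_diag_top P hE hcd a hρ
  · show rmap P (prod.lift (u ≫ h) b) σ = ⊤
    rw [hu2]; exact rmap_diag_top P hE hcd b hσ
  · intro u' _ h1 h2
    show rmap P (prod.lift u u') _ = ⊤
    rw [rmap_inf', ← rmap_comp, ← rmap_comp, prod.lift_map, prod.lift_map, hu1, hu2,
      rmap_swap P hE b (u' ≫ h) hσ, rmap_swap P hE a (u' ≫ k) hρ]
    rw [QEq] at h1 h2
    rw [h1, h2, inf_top_eq]


end DoctrinePaper
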